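/- Let p be an odd prime, q = p^f, n = (q-1)/2, and for r ∈ [0, q-2] with base-p digits r = Σ_{i=0}^{f-1} r_i p^i let s(r) = Σ r_i be the digit sum. Then for every r ∈ [0, n-1], s(n) + s(n+r) > s(r). -/

import Mathlib

/-- digit sum of 1 -/
lemma dsum_one {p : ℕ} (hp : 1 < p) : (Nat.digits p 1).sum = 1 := by
  rw [Nat.digits_of_lt p 1 one_ne_zero hp]; simp

/-- digit-sum recursion -/
lemma dsum_step {p : ℕ} (hp : 1 < p) {a : ℕ} (ha : 0 < a) :
    (Nat.digits p a).sum = a % p + (Nat.digits p (a / p)).sum := by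
  rw [Nat.digits_def' hp ha]; simp

/-- digit-sum recursion, valid also at 0 -/
lemma dsum_step' {p : ℕ} (hp : 1 < p) (a : ℕ) :
    (Nat.digits p a).sum = a % p + (Nat.digits p (a / p)).sum := by
  rcases Nat.eq_zero_or_pos a with rfl | ha
  · simp
  · exact dsum_step hp ha

/-- subadditivity of the digit sum -/
lemma dsum_add_le_aux {p : ℕ} (hp : 1 < p) :
    ∀ N a b : ℕ, a + b ≤ N →
      (Nat.digits p (a + b)).sum ≤ (Nat.digits p a).sum + (Nat.digits p b).sum := by
  intro N
  induction N with
  | zero =>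
    intro a b hab
    have ha : a = 0 := by omega
    have hb : b = 0 := by omega
    subst ha; subst hb; simp
  | succ N ih =>
    intro a b hab
    rcases Nat.eq_zero_or_pos a with rfl | ha
    · simp
    rcases Nat.eq_zero_or_pos b with rfl | hb
    · simp
    have hap : a / p < a := Nat.div_lt_self ha hp
    have hbp : b / p < b := Nat.div_lt_self hb hp
    have hda : a = p * (a / p) + a % p := (Nat.div_add_mod a p).symm ▸ by omega
    have hdb : b = p * (b / p) + b % p := (Nat.div_add_mod b p).symm ▸ by omega
    have hma : a % p < p := Nat.mod_lt _ (by omega)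
    have hmb : b % p < p := Nat.mod_lt _ (by omega)
    rw [dsum_step hp ha, dsum_step hp hb]
    by_cases hc : a % p + b % p < p
    · have hmod : (a + b) % p = a % p + b % p := by
        conv_lhs => rw [hda, hdb]
        rw [show p * (a / p) + a % p + (p * (b / p) + b % p)
              = a % p + b % p + p * (a / p + b / p) by ring]
        rw [Nat.add_mul_mod_self_left, Nat.mod_eq_of_lt hc]
      have hdiv : (a + b) / p = a / p + b / p := by
        conv_lhs => rw [hda, hdb]
        rw [show p * (a / p) + a % p + (p * (b / p) + b % p)
              = a % p + b % p + p * (a / p + b / p) by ring]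
        rw [Nat.add_mul_div_left _ _ (by omega : 0 < p), Nat.div_eq_of_lt hc]; omega
      rw [dsum_step hp (by omega : 0 < a + b), hmod, hdiv]
      have := ih (a / p) (b / p) (by omega)
      omega
    · push_neg at hc
      have hmod : (a + b) % p = a % p + b % p - p := by
        conv_lhs => rw [hda, hdb]
        rw [show p * (a / p) + a % p + (p * (b / p) + b % p)
              = (a % p + b % p - p) + p * (a / p + b / p + 1) by
                rw [Nat.mul_add, Nat.mul_add, Nat.mul_one]; omega]
        rw [Nat.add_mul_mod_self_left, Nat.mod_eq_of_lt (by omega)]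
      have hdiv : (a + b) / p = a / p + b / p + 1 := by
        conv_lhs => rw [hda, hdb]
        rw [show p * (a / p) + a % p + (p * (b / p) + b % p)
              = (a % p + b % p - p) + p * (a / p + b / p + 1) by
                rw [Nat.mul_add, Nat.mul_add, Nat.mul_one]; omega]
        rw [Nat.add_mul_div_left _ _ (by omega : 0 < p),
          Nat.div_eq_of_lt (by omega)]; omega
      rw [dsum_step hp (by omega : 0 < a + b), hmod, hdiv]
      have h1 := ih (a / p + b / p) 1 (by omega)
      have h2 := ih (a / p) (b / p) (by omega)
      rw [dsum_one hp] at h1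
      omega

lemma dsum_add_le {p : ℕ} (hp : 1 < p) (a b : ℕ) :
    (Nat.digits p (a + b)).sum ≤ (Nat.digits p a).sum + (Nat.digits p b).sum :=
  dsum_add_le_aux hp (a + b) a b le_rfl

/-- strict subadditivity when the sum overflows -/
lemma dsum_add_lt {p : ℕ} (hp : 1 < p) :
    ∀ f a b : ℕ, a < p ^ f → b < p ^ f → p ^ f ≤ a + b →
      (Nat.digits p (a + b)).sum < (Nat.digits p a).sum + (Nat.digits p b).sum := by
  intro f
  induction f with
  | zero => intro a b ha hb h; simp only [pow_zero] at ha hb h; omega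
  | succ f ih =>
    intro a b ha hb h
    have hppos : 0 < p := by omega
    have hppow : 0 < p ^ f := Nat.pow_pos hppos
    have hpow : p ^ (f + 1) = p * p ^ f := by ring
    have ha0 : 0 < a := by
      rcases Nat.eq_zero_or_pos a with rfl | h'; · omega
      · exact h'
    have hb0 : 0 < b := by
      rcases Nat.eq_zero_or_pos b with rfl | h'; · omega
      · exact h'
    have hda : a = p * (a / p) + a % p := (Nat.div_add_mod a p).symm ▸ by omega
    have hdb : b = p * (b / p) + b % p := (Nat.div_add_mod b p).symm ▸ by omega
    have hma : a % p < p := Nat.mod_lt _ hppos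
    have hmb : b % p < p := Nat.mod_lt _ hppos
    have hap : a / p < p ^ f := by
      rw [Nat.div_lt_iff_lt_mul hppos, mul_comm (p ^ f) p, ← hpow]; exact ha
    have hbp : b / p < p ^ f := by
      rw [Nat.div_lt_iff_lt_mul hppos, mul_comm (p ^ f) p, ← hpow]; exact hb
    rw [dsum_step hp ha0, dsum_step hp hb0]
    by_cases hc : a % p + b % p < p
    · have hmod : (a + b) % p = a % p + b % p := by
        conv_lhs => rw [hda, hdb]
        rw [show p * (a / p) + a % p + (p * (b / p) + b % p)
              = a % p + b % p + p * (a / p + b / p) by ring]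
        rw [Nat.add_mul_mod_self_left, Nat.mod_eq_of_lt hc]
      have hdiv : (a + b) / p = a / p + b / p := by
        conv_lhs => rw [hda, hdb]
        rw [show p * (a / p) + a % p + (p * (b / p) + b % p)
              = a % p + b % p + p * (a / p + b / p) by ring]
        rw [Nat.add_mul_div_left _ _ hppos, Nat.div_eq_of_lt hc]; omega
      have hsum : p ^ f ≤ a / p + b / p := by
        by_contra hlt
        push_neg at hlt
        have h1 : a / p + b / p + 1 ≤ p ^ f := by omega
        have h2 : p * (a / p + b / p + 1) ≤ p * p ^ f := Nat.mul_le_mul_left p h1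
        rw [Nat.mul_add, Nat.mul_add, Nat.mul_one] at h2
        rw [hpow] at h
        omega
      rw [dsum_step hp (by omega : 0 < a + b), hmod, hdiv]
      have := ih (a / p) (b / p) hap hbp hsum
      omega
    · push_neg at hc
      have hmod : (a + b) % p = a % p + b % p - p := by
        conv_lhs => rw [hda, hdb]
        rw [show p * (a / p) + a % p + (p * (b / p) + b % p)
              = (a % p + b % p - p) + p * (a / p + b / p + 1) by
                rw [Nat.mul_add, Nat.mul_add, Nat.mul_one]; omega]
        rw [Nat.add_mul_mod_self_left, Nat.mod_eq_of_lt (by omega)]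
      have hdiv : (a + b) / p = a / p + b / p + 1 := by
        conv_lhs => rw [hda, hdb]
        rw [show p * (a / p) + a % p + (p * (b / p) + b % p)
              = (a % p + b % p - p) + p * (a / p + b / p + 1) by
                rw [Nat.mul_add, Nat.mul_add, Nat.mul_one]; omega]
        rw [Nat.add_mul_div_left _ _ hppos, Nat.div_eq_of_lt (by omega)]; omega
      rw [dsum_step hp (by omega : 0 < a + b), hmod, hdiv]
      have h1 := dsum_add_le hp (a / p + b / p) 1
      have h2 := dsum_add_le hp (a / p) (b / p)
      rw [dsum_one hp] at h1
      omega

/-- digit sum of p^f + t for t < p^f -/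
lemma dsum_pow_add {p : ℕ} (hp : 1 < p) :
    ∀ f t : ℕ, t < p ^ f →
      (Nat.digits p (p ^ f + t)).sum = 1 + (Nat.digits p t).sum := by
  intro f
  induction f with
  | zero =>
    intro t ht
    have : t = 0 := by simpa using ht
    subst this
    simp [dsum_one hp]
  | succ f ih =>
    intro t ht
    have hppos : 0 < p := by omega
    have hppow : 0 < p ^ f := Nat.pow_pos hppos
    have hpow : p ^ (f + 1) = p * p ^ f := by ring
    have hpos : 0 < p ^ (f + 1) + t := by positivity
    have htp : t / p < p ^ f := by
      rw [Nat.div_lt_iff_lt_mul hppos, mul_comm (p ^ f) p, ← hpow]; exact ht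
    have hmod : (p ^ (f + 1) + t) % p = t % p := by
      rw [hpow, add_comm, Nat.add_mul_mod_self_left]
    have hdiv : (p ^ (f + 1) + t) / p = p ^ f + t / p := by
      rw [hpow, add_comm, Nat.add_mul_div_left _ _ hppos]; omega
    rw [dsum_step hp hpos, hmod, hdiv, ih (t / p) htp, dsum_step' hp t]
    omega

/-- positivity of digit sum -/
lemma dsum_pos {p : ℕ} (hp : 1 < p) : ∀ n : ℕ, 0 < n → 0 < (Nat.digits p n).sum := by
  intro n
  induction n using Nat.strong_induction_on with
  | _ n ih =>
    intro hn
    rw [dsum_step hp hn]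
    rcases Nat.eq_zero_or_pos (n % p) with hm | hm
    · have hdvd : p ∣ n := Nat.dvd_of_mod_eq_zero hm
      have : p ≤ n := Nat.le_of_dvd hn hdvd
      have hdiv : 0 < n / p := Nat.div_pos this (by omega)
      have := ih (n / p) (Nat.div_lt_self hn hp) hdiv
      omega
    · omega

theorem digit_sum_ineq (p f n : ℕ) (hp : p.Prime) (hodd : p ≠ 2) (hf : 1 ≤ f)
    (hn : p ^ f = 2 * n + 1) :
    ∀ r < n, (Nat.digits p r).sum < (Nat.digits p n).sum + (Nat.digits p (n + r)).sum := by
  intro r hr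
  have hp1 : 1 < p := hp.one_lt
  have hnpos : 0 < n := by
    rcases Nat.eq_zero_or_pos n with rfl | h
    · exfalso
      have : p ≤ p ^ f := Nat.le_self_pow (by omega) p
      omega
    · exact h
  rcases Nat.eq_zero_or_pos r with rfl | hr0
  · have h1 := dsum_pos hp1 n hnpos
    simpa using by omega
  · -- r ≥ 1
    have key : (Nat.digits p (n + (n + r))).sum
        < (Nat.digits p n).sum + (Nat.digits p (n + r)).sum :=
      dsum_add_lt hp1 f n (n + r) (by omega) (by omega) (by omega)
    have heq : n + (n + r) = p ^ f + (r - 1) := by omega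
    rw [heq, dsum_pow_add hp1 f (r - 1) (by omega)] at key
    have hle : (Nat.digits p r).sum ≤ (Nat.digits p (r - 1)).sum + 1 := by
      have := dsum_add_le hp1 (r - 1) 1
      rw [dsum_one hp1] at this
      have hr1 : r - 1 + 1 = r := by omega
      rw [hr1] at this
      exact this
    omega
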